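/- In the epidemic setting with severity and testing, let t ∈ ℝ with Ω_t nonempty, and assume the suppression hypothesis holds at all times t' < t. Then for every ρ ∈ (−∞, +∞], P_t(τ̌^T_t = ρ) = Σ_g Σ_{τ > 0} P_{t−τ,g}(τ^T = ρ + τ) · ((1 − ξ_{t−τ}·1_{ρ ≤ 0})/(1 − ξ_{t−τ}·F^T_{t−τ,g}(τ))) · P_t(τ^σ_t = τ, Ĝ_t = g), where g ranges over the range of G, the sum over τ runs over the finitely many positive generation times with Ω_{t−τ,g} nonempty, and τ̌^T(ω) := τ^T(σ(ω)) − τ^σ(ω). -/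

import Mathlib

open Finset
open scoped Classical ENNReal NNReal

noncomputable section

variable {Ω : Type*} [Fintype Ω]

/-- Number of elements of `Ω` satisfying `E`, as a real number. -/
def cnt (E : Ω → Prop) : ℝ := ((Finset.univ.filter E).card : ℝ)

/-- The uniform (counting) probability of the event `E`. -/
def pr (E : Ω → Prop) : ℝ := cnt E / (Fintype.card Ω : ℝ)

/-- The conditional probability of the event `E` given the event `C`
(junk value `0` if `C` is empty). -/
def prC (C E : Ω → Prop) : ℝ := cnt (fun ω => C ω ∧ E ω) / cnt C

/-- The expectation of `X` under the uniform probability measure. -/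
def expec (X : Ω → ℝ) : ℝ := (∑ ω, X ω) / (Fintype.card Ω : ℝ)

/-- The conditional expectation of `X` given the event `C`, i.e. the average of `X`
over `C` (junk value `0` if `C` is empty). -/
def expecC (C : Ω → Prop) (X : Ω → ℝ) : ℝ :=
  (∑ ω ∈ Finset.univ.filter C, X ω) / cnt C

end

noncomputable section

variable {Ω : Type*} [Fintype Ω]

/-- `ninf tI σ τ ω` is the number of people infected by `ω` exactly at `ω`'s infectious
age `τ`: the number of `ω' ∈ Ω_{>0}` with `σ ω' = ω` and generation time `τ^σ ω' = τ`. -/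
def ninf (tI : Ω → ℝ) (σ : Ω → Ω) (τ : ℝ) (ω : Ω) : ℝ :=
  cnt (fun ω' => 0 < tI ω' ∧ σ ω' = ω ∧ tI ω' - tI (σ ω') = τ)

/-- The (finitely many) positive times `τ` such that `Ω_{t-τ}` is nonempty. -/
def genTimes (tI : Ω → ℝ) (t : ℝ) : Finset ℝ :=
  (Finset.univ.image (fun ω' => t - tI ω')).filter (fun τ => 0 < τ)

end

noncomputable section

variable {Ω : Type*} [Fintype Ω]

/-- The (finitely many) positive times `τ` such that `Ω_{t-τ,g}` is nonempty. -/
def genTimesG (tI G : Ω → ℝ) (t g : ℝ) : Finset ℝ :=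
  ((Finset.univ.filter (fun ω' => G ω' = g)).image (fun ω' => t - tI ω')).filter
    (fun τ => 0 < τ)

/-- `FT tI G τT t' g τ` is the improper CDF `F^T_{t',g}(τ) = P_{t',g}(τ^T ≤ τ)` of the
testing time of individuals infected at `t'` with severity `g`. -/
def FT (tI G : Ω → ℝ) (τT : Ω → ℝ≥0∞) (t' g τ : ℝ) : ℝ :=
  prC (fun ω => tI ω = t' ∧ G ω = g) (fun ω => (τT ω : EReal) ≤ (τ : ℝ))

end

section helpers11

open scoped Classical

variable {Ω : Type*} [Fintype Ω]

lemma cnt_congr' {E F : Ω → Prop} (h : ∀ ω, E ω ↔ F ω) : cnt E = cnt F := by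
  have : E = F := funext fun ω => propext (h ω)
  rw [this]

lemma cnt_eq_sum' (E : Ω → Prop) [DecidablePred E] :
    cnt E = ∑ ω, if E ω then (1 : ℝ) else 0 := by
  classical
  rw [cnt, Finset.card_filter]
  push_cast
  refine Finset.sum_congr rfl fun ω _ => ?_
  congr 1

lemma cnt_eq_zero' {E : Ω → Prop} (h : ∀ ω, ¬ E ω) : cnt E = 0 := by
  rw [cnt_eq_sum']
  exact Finset.sum_eq_zero fun ω _ => if_neg (h ω)

lemma cnt_pos' {E : Ω → Prop} (h : (Finset.univ.filter E).Nonempty) : 0 < cnt E := by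
  rw [cnt]
  exact_mod_cast Finset.card_pos.2 h

lemma ereal_sub_eq_iff {x ρ : EReal} {τ : ℝ} : x - (τ : ℝ) = ρ ↔ x = ρ + (τ : ℝ) := by
  constructor
  · rintro rfl; exact EReal.sub_add_cancel.symm
  · rintro rfl; exact EReal.add_sub_cancel_right

lemma ereal_add_le_iff {ρ : EReal} {τ : ℝ} : ρ + (τ : ℝ) ≤ (τ : ℝ) ↔ ρ ≤ 0 := by
  nth_rewrite 2 [show ((τ : ℝ) : EReal) = 0 + (τ : ℝ) by rw [zero_add]]
  exact (EReal.addLECancellable_coe τ).add_le_add_iff_right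

/-- Counting infectees at time `t` with generation time `τ` whose infector satisfies `Q`,
fiberwise over the infectors. -/
lemma fiber_count (tI : Ω → ℝ) (σ : Ω → Ω) (t τ : ℝ) (Q : Ω → Prop) :
    cnt (fun ω => tI ω = t ∧ 0 < tI ω ∧ tI ω - tI (σ ω) = τ ∧ Q (σ ω)) =
      ∑ ω' ∈ Finset.univ.filter (fun ω' => tI ω' = t - τ ∧ Q ω'), ninf tI σ τ ω' := by
  classical
  have hsum : ∀ ω' : Ω, ninf tI σ τ ω' =
      ∑ ω'' : Ω, if 0 < tI ω'' ∧ σ ω'' = ω' ∧ tI ω'' - tI (σ ω'') = τ then (1:ℝ) else 0 :=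
    fun ω' => cnt_eq_sum' _
  rw [cnt_eq_sum']
  calc ∑ ω'', (if tI ω'' = t ∧ 0 < tI ω'' ∧ tI ω'' - tI (σ ω'') = τ ∧ Q (σ ω'') then (1:ℝ) else 0)
      = ∑ ω'', ∑ ω' ∈ Finset.univ.filter (fun ω' => tI ω' = t - τ ∧ Q ω'),
          (if 0 < tI ω'' ∧ σ ω'' = ω' ∧ tI ω'' - tI (σ ω'') = τ then (1:ℝ) else 0) := by
        refine Finset.sum_congr rfl fun ω'' _ => ?_
        have hswap : ∀ ω' : Ω, (if 0 < tI ω'' ∧ σ ω'' = ω' ∧ tI ω'' - tI (σ ω'') = τ then (1:ℝ) else 0)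
            = if σ ω'' = ω' then (if 0 < tI ω'' ∧ tI ω'' - tI (σ ω'') = τ then (1:ℝ) else 0) else 0 := by
          intro ω'; by_cases h : σ ω'' = ω' <;> simp [h, and_assoc, and_comm]
        simp only [hswap]
        rw [Finset.sum_ite_eq]
        by_cases hmem : σ ω'' ∈ Finset.univ.filter (fun ω' => tI ω' = t - τ ∧ Q ω')
        · rw [if_pos hmem]
          simp only [Finset.mem_filter, Finset.mem_univ, true_and] at hmem
          refine if_congr ?_ rfl rfl
          constructor
          · rintro ⟨h1, h2, h3, h4⟩; exact ⟨h2, h3⟩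
          · rintro ⟨h2, h3⟩; exact ⟨by linarith [hmem.1], h2, h3, hmem.2⟩
        · rw [if_neg hmem, if_neg]
          simp only [Finset.mem_filter, Finset.mem_univ, true_and] at hmem
          rintro ⟨h1, h2, h3, h4⟩
          exact hmem ⟨by linarith, h4⟩
    _ = ∑ ω' ∈ Finset.univ.filter (fun ω' => tI ω' = t - τ ∧ Q ω'), ninf tI σ τ ω' := by
        rw [Finset.sum_comm]
        exact Finset.sum_congr rfl fun ω' _ => (hsum ω').symm

lemma cnt_nonneg' (E : Ω → Prop) : 0 ≤ cnt E := by
  rw [cnt]; positivity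

lemma filter_eq_filter {C : Ω → Prop} (i1 i2 : DecidablePred C) :
    @Finset.filter Ω C i1 Finset.univ = @Finset.filter Ω C i2 Finset.univ := by
  rw [Subsingleton.elim i1 i2]

lemma cnt_eq_card {C : Ω → Prop} (i : DecidablePred C) :
    cnt C = ((@Finset.filter Ω C i Finset.univ).card : ℝ) := by
  classical
  rw [cnt]
  norm_cast
  exact congrArg Finset.card (filter_eq_filter _ i)

lemma cnt_pos'' {E : Ω → Prop} (h : ∃ ω, E ω) : 0 < cnt E := by
  classical
  rw [cnt]
  exact_mod_cast Finset.card_pos.2 ⟨h.choose, by simp [h.choose_spec]⟩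

lemma sum_filter_zero {C : Ω → Prop} (i : DecidablePred C) (X : Ω → ℝ) (h : cnt C = 0) :
    ∑ ω ∈ @Finset.filter Ω C i Finset.univ, X ω = 0 := by
  have hc : (@Finset.filter Ω C i Finset.univ).card = 0 := by
    rw [cnt_eq_card i] at h; exact_mod_cast h
  rw [Finset.card_eq_zero.1 hc, Finset.sum_empty]

lemma sum_filter_expec {C : Ω → Prop} (i : DecidablePred C) (X : Ω → ℝ) (h : cnt C ≠ 0) :
    ∑ ω ∈ @Finset.filter Ω C i Finset.univ, X ω = cnt C * expecC C X := by
  classical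
  rw [expecC, mul_comm, div_mul_cancel₀ _ h]
  exact Finset.sum_congr (filter_eq_filter i _) fun _ _ => rfl

end helpers11

/-- distribution of the infector's testing time, seen from the
infectee.  Epidemic setting with severity `G` and testing time `τ^T : Ω → [0,∞]`
(`+∞` if never tested, with the convention `+∞ − τ = +∞`, realized in `EReal`);
`τ̌^T(ω) := τ^T(σ ω) − τ^σ(ω)` on `Ω_{>0}`; `ξ : ℝ → [0,1]`.  Assuming the suppression
hypothesis at all times `t' < t`, for every `ρ ∈ (−∞, +∞]`:
`P_t(τ̌^T_t = ρ) = Σ_g Σ_{τ>0} P_{t−τ,g}(τ^T = ρ+τ) · ((1 − ξ_{t−τ}·1_{ρ≤0})/(1 − ξ_{t−τ}·F^T_{t−τ,g}(τ))) · P_t(τ^σ_t = τ, Ĝ_t = g)`,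
`g` ranging over the range of `G` and `τ` over the finitely many positive generation
times with `Ω_{t−τ,g}` nonempty. -/
theorem statement_11 {Ω : Type*} [Fintype Ω] (tI : Ω → ℝ) (σ : Ω → Ω)
    (hσ : ∀ ω, 0 < tI ω → tI (σ ω) < tI ω)
    (G : Ω → ℝ) (τT : Ω → ℝ≥0∞) (ξ : ℝ → ℝ)
    (hξ : ∀ s : ℝ, 0 ≤ ξ s ∧ ξ s ≤ 1) (t : ℝ)
    (hne : (Finset.univ.filter (fun ω => tI ω = t)).Nonempty)
    (hsup : ∀ t' : ℝ, t' < t → ∀ g : ℝ,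
      (Finset.univ.filter (fun ω => tI ω = t' ∧ G ω = g)).Nonempty →
      ∀ τ : ℝ, 0 < τ → ∀ ρ' : ℝ≥0∞,
        0 < prC (fun ω => tI ω = t' ∧ G ω = g) (fun ω => τT ω = ρ') →
          0 < 1 - ξ t' * FT tI G τT t' g τ ∧
          expecC (fun ω => tI ω = t' ∧ G ω = g ∧ τT ω = ρ') (ninf tI σ τ) =
            ((1 - ξ t' * (if (ρ' : EReal) ≤ (τ : ℝ) then (1 : ℝ) else 0)) /
                (1 - ξ t' * FT tI G τT t' g τ)) *
              expecC (fun ω => tI ω = t' ∧ G ω = g) (ninf tI σ τ)) :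
    ∀ ρ : EReal, ρ ≠ ⊥ →
      prC (fun ω => tI ω = t)
          (fun ω => 0 < tI ω ∧ (τT (σ ω) : EReal) - ((tI ω - tI (σ ω) : ℝ) : EReal) = ρ) =
        ∑ g ∈ Finset.univ.image G, ∑ τ ∈ genTimesG tI G t g,
          prC (fun ω => tI ω = t - τ ∧ G ω = g)
              (fun ω => (τT ω : EReal) = ρ + (τ : ℝ)) *
            ((1 - ξ (t - τ) * (if ρ ≤ (0 : EReal) then (1 : ℝ) else 0)) /
                (1 - ξ (t - τ) * FT tI G τT (t - τ) g τ)) *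
            prC (fun ω => tI ω = t)
              (fun ω => 0 < tI ω ∧ tI ω - tI (σ ω) = τ ∧ G (σ ω) = g) := by
  classical
  intro ρ hρ
  -- per-(g,τ) indicator decomposition of the LHS event
  have perω : ∀ ω : Ω,
      (if tI ω = t ∧ (0 < tI ω ∧ (τT (σ ω) : EReal) - ((tI ω - tI (σ ω) : ℝ) : EReal) = ρ)
          then (1:ℝ) else 0) =
      ∑ g ∈ Finset.univ.image G, ∑ τ ∈ genTimesG tI G t g,
        (if tI ω = t ∧ 0 < tI ω ∧ tI ω - tI (σ ω) = τ ∧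
            (G (σ ω) = g ∧ (τT (σ ω) : EReal) = ρ + (τ : ℝ)) then (1:ℝ) else 0) := by
    intro ω
    by_cases hL : tI ω = t ∧ (0 < tI ω ∧ (τT (σ ω) : EReal) - ((tI ω - tI (σ ω) : ℝ) : EReal) = ρ)
    · obtain ⟨h1, h2, h3⟩ := hL
      rw [if_pos ⟨h1, h2, h3⟩]
      have hτ0pos : 0 < tI ω - tI (σ ω) := sub_pos.2 (hσ ω h2)
      have hg0 : G (σ ω) ∈ Finset.univ.image G :=
        Finset.mem_image_of_mem G (Finset.mem_univ _)
      have hτ0 : tI ω - tI (σ ω) ∈ genTimesG tI G t (G (σ ω)) := by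
        simp only [genTimesG, Finset.mem_filter, Finset.mem_image, Finset.mem_univ, true_and]
        exact ⟨⟨σ ω, rfl, by rw [← h1]⟩, hτ0pos⟩
      have e1 : ∀ g ∈ Finset.univ.image G, g ≠ G (σ ω) →
          (∑ τ ∈ genTimesG tI G t g,
            (if tI ω = t ∧ 0 < tI ω ∧ tI ω - tI (σ ω) = τ ∧
                (G (σ ω) = g ∧ (τT (σ ω) : EReal) = ρ + (τ : ℝ)) then (1:ℝ) else 0)) = 0 := by
        intro g _ hgne
        refine Finset.sum_eq_zero fun τ _ => ?_
        rw [if_neg]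
        rintro ⟨_, _, _, hgg, _⟩
        exact hgne (by rw [← hgg])
      have e2 : ∀ τ ∈ genTimesG tI G t (G (σ ω)), τ ≠ tI ω - tI (σ ω) →
          (if tI ω = t ∧ 0 < tI ω ∧ tI ω - tI (σ ω) = τ ∧
              (G (σ ω) = G (σ ω) ∧ (τT (σ ω) : EReal) = ρ + (τ : ℝ)) then (1:ℝ) else 0) = 0 := by
        intro τ _ hτne
        rw [if_neg]
        rintro ⟨_, _, hττ, _⟩
        exact hτne (by rw [← hττ])
      rw [Finset.sum_eq_single_of_mem _ hg0 e1, Finset.sum_eq_single_of_mem _ hτ0 e2, if_pos]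
      exact ⟨h1, h2, rfl, rfl, ereal_sub_eq_iff.1 h3⟩
    · rw [if_neg hL]
      symm
      refine Finset.sum_eq_zero fun g _ => Finset.sum_eq_zero fun τ _ => ?_
      rw [if_neg]
      rintro ⟨h1, h2, h3, _, h5⟩
      exact hL ⟨h1, h2, by rw [h3, h5]; exact EReal.add_sub_cancel_right⟩
  -- the decomposition at the counting level
  have decomp :
      cnt (fun ω => tI ω = t ∧
          (0 < tI ω ∧ (τT (σ ω) : EReal) - ((tI ω - tI (σ ω) : ℝ) : EReal) = ρ)) =
      ∑ g ∈ Finset.univ.image G, ∑ τ ∈ genTimesG tI G t g,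
        cnt (fun ω => tI ω = t ∧ 0 < tI ω ∧ tI ω - tI (σ ω) = τ ∧
          (G (σ ω) = g ∧ (τT (σ ω) : EReal) = ρ + (τ : ℝ))) := by
    rw [cnt_eq_sum']
    calc (∑ ω : Ω, if tI ω = t ∧
            (0 < tI ω ∧ (τT (σ ω) : EReal) - ((tI ω - tI (σ ω) : ℝ) : EReal) = ρ)
            then (1:ℝ) else 0)
        = ∑ ω : Ω, ∑ g ∈ Finset.univ.image G, ∑ τ ∈ genTimesG tI G t g,
            (if tI ω = t ∧ 0 < tI ω ∧ tI ω - tI (σ ω) = τ ∧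
              (G (σ ω) = g ∧ (τT (σ ω) : EReal) = ρ + (τ : ℝ)) then (1:ℝ) else 0) :=
          Finset.sum_congr rfl fun ω _ => perω ω
      _ = ∑ g ∈ Finset.univ.image G, ∑ ω : Ω, ∑ τ ∈ genTimesG tI G t g,
            (if tI ω = t ∧ 0 < tI ω ∧ tI ω - tI (σ ω) = τ ∧
              (G (σ ω) = g ∧ (τT (σ ω) : EReal) = ρ + (τ : ℝ)) then (1:ℝ) else 0) :=
          Finset.sum_comm
      _ = ∑ g ∈ Finset.univ.image G, ∑ τ ∈ genTimesG tI G t g, ∑ ω : Ω,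
            (if tI ω = t ∧ 0 < tI ω ∧ tI ω - tI (σ ω) = τ ∧
              (G (σ ω) = g ∧ (τT (σ ω) : EReal) = ρ + (τ : ℝ)) then (1:ℝ) else 0) :=
          Finset.sum_congr rfl fun g _ => Finset.sum_comm
      _ = _ := Finset.sum_congr rfl fun g _ => Finset.sum_congr rfl fun τ _ =>
          (cnt_eq_sum' _).symm
  -- the key per-(g,τ) identity
  have key : ∀ g : ℝ, ∀ τ ∈ genTimesG tI G t g,
      cnt (fun ω => tI ω = t ∧ 0 < tI ω ∧ tI ω - tI (σ ω) = τ ∧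
          (G (σ ω) = g ∧ (τT (σ ω) : EReal) = ρ + (τ : ℝ))) =
        prC (fun ω => tI ω = t - τ ∧ G ω = g) (fun ω => (τT ω : EReal) = ρ + (τ : ℝ)) *
          ((1 - ξ (t - τ) * (if ρ ≤ (0 : EReal) then (1 : ℝ) else 0)) /
              (1 - ξ (t - τ) * FT tI G τT (t - τ) g τ)) *
          cnt (fun ω => tI ω = t ∧ (0 < tI ω ∧ tI ω - tI (σ ω) = τ ∧ G (σ ω) = g)) := by
    intro g τ hτ
    simp only [genTimesG, Finset.mem_filter, Finset.mem_image, Finset.mem_univ, true_and] at hτ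
    obtain ⟨⟨ω₀, hgω₀, hτω₀⟩, hτpos⟩ := hτ
    have htω₀ : tI ω₀ = t - τ := by linarith
    have hnC : 0 < cnt (fun ω => tI ω = t - τ ∧ G ω = g) := cnt_pos'' ⟨ω₀, htω₀, hgω₀⟩
    rw [prC]
    have hA : cnt (fun ω => tI ω = t ∧ (0 < tI ω ∧ tI ω - tI (σ ω) = τ ∧ G (σ ω) = g)) =
        cnt (fun ω => tI ω = t - τ ∧ G ω = g) *
          expecC (fun ω => tI ω = t - τ ∧ G ω = g) (ninf tI σ τ) :=
      (fiber_count tI σ t τ (fun x => G x = g)).trans (sum_filter_expec _ _ hnC.ne')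
    by_cases hex : ∃ ρ' : ℝ≥0∞, (ρ' : EReal) = ρ + (τ : ℝ)
    · obtain ⟨ρ', hρ'⟩ := hex
      have hev : ∀ x : Ω, ((τT x : EReal) = ρ + (τ : ℝ)) ↔ τT x = ρ' := by
        intro x; rw [← hρ', EReal.coe_ennreal_eq_coe_ennreal_iff]
      have hAρ := (cnt_congr'
          (E := fun ω => tI ω = t ∧ 0 < tI ω ∧ tI ω - tI (σ ω) = τ ∧
            (G (σ ω) = g ∧ (τT (σ ω) : EReal) = ρ + (τ : ℝ)))
          (fun ω => by simp only [hev])).trans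
        (fiber_count tI σ t τ (fun x => G x = g ∧ τT x = ρ'))
      have hDcnt : cnt (fun ω => (tI ω = t - τ ∧ G ω = g) ∧ (τT ω : EReal) = ρ + (τ : ℝ)) =
          cnt (fun ω => tI ω = t - τ ∧ G ω = g ∧ τT ω = ρ') :=
        cnt_congr' fun ω => by rw [hev ω]; tauto
      by_cases hD : cnt (fun ω => tI ω = t - τ ∧ G ω = g ∧ τT ω = ρ') = 0
      · rw [hAρ, sum_filter_zero _ _ hD, hDcnt, hD]
        ring
      · have hDpos : 0 < cnt (fun ω => tI ω = t - τ ∧ G ω = g ∧ τT ω = ρ') :=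
          lt_of_le_of_ne (cnt_nonneg' _) (Ne.symm hD)
        have hassoc : cnt (fun ω => (tI ω = t - τ ∧ G ω = g) ∧ τT ω = ρ') =
            cnt (fun ω => tI ω = t - τ ∧ G ω = g ∧ τT ω = ρ') :=
          cnt_congr' fun ω => and_assoc
        have hprpos : 0 < prC (fun ω => tI ω = t - τ ∧ G ω = g) (fun ω => τT ω = ρ') := by
          rw [prC]
          exact div_pos (hassoc.symm ▸ hDpos) hnC
        have hCne : (Finset.univ.filter (fun ω => tI ω = t - τ ∧ G ω = g)).Nonempty :=
          ⟨ω₀, Finset.mem_filter.2 ⟨Finset.mem_univ _, htω₀, hgω₀⟩⟩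
        obtain ⟨hden, hexp⟩ := hsup (t - τ) (by linarith) g hCne τ hτpos ρ' hprpos
        have hind : ((ρ' : EReal) ≤ ((τ : ℝ) : EReal)) ↔ ρ ≤ (0 : EReal) := by
          rw [hρ']; exact ereal_add_le_iff
        rw [hAρ, sum_filter_expec _ _ hD, hexp, hDcnt, hA]
        simp only [hind]
        field_simp
    · have hno : ∀ x : ℝ≥0∞, (x : EReal) ≠ ρ + (τ : ℝ) := fun x hx => hex ⟨x, hx⟩
      rw [cnt_eq_zero' (fun ω => ?_), cnt_eq_zero' (E := fun ω =>
          (tI ω = t - τ ∧ G ω = g) ∧ (τT ω : EReal) = ρ + (τ : ℝ)) (fun ω => ?_)]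
      · ring
      · rintro ⟨_, h5⟩; exact hno _ h5
      · rintro ⟨_, _, _, _, h5⟩; exact hno _ h5
  -- assemble
  show cnt (fun ω => tI ω = t ∧
        (0 < tI ω ∧ (τT (σ ω) : EReal) - ((tI ω - tI (σ ω) : ℝ) : EReal) = ρ)) /
      cnt (fun ω : Ω => tI ω = t) =
    ∑ g ∈ Finset.univ.image G, ∑ τ ∈ genTimesG tI G t g,
      prC (fun ω => tI ω = t - τ ∧ G ω = g) (fun ω => (τT ω : EReal) = ρ + (τ : ℝ)) *
        ((1 - ξ (t - τ) * (if ρ ≤ (0 : EReal) then (1 : ℝ) else 0)) /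
            (1 - ξ (t - τ) * FT tI G τT (t - τ) g τ)) *
        (cnt (fun ω => tI ω = t ∧ (0 < tI ω ∧ tI ω - tI (σ ω) = τ ∧ G (σ ω) = g)) /
          cnt (fun ω : Ω => tI ω = t))
  rw [decomp, Finset.sum_div]
  refine Finset.sum_congr rfl fun g hg => ?_
  rw [Finset.sum_div]
  refine Finset.sum_congr rfl fun τ hτg => ?_
  rw [key g τ hτg, mul_div_assoc]
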